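/- Let V be a nonempty finite type, T ≥ 1, μ_T a PMF on V (initial distribution), and for each t = 1,…,T let K_t : V → V → ℝ be a Markov transition kernel on V. Fix β > 0, r : V → ℝ, and define partial rewards r_0 := r and r_t(x) := β·log( Σ_{x_0,…,x_{t-1}} (∏_{u=1}^{t} K_u(x_u,x_{u-1}))·exp(r(x_0)/β) ) at x_t = x. Define the joint chain law P(x_0,…,x_T) := μ_T(x_T)·∏_{t=1}^{T} K_t(x_t,x_{t-1}), the constant Z := Σ_{x∈V} μ_T(x)·exp(r_T(x)/β), the tilted initial distribution μ*_T(x) := μ_T(x)·exp(r_T(x)/β)/Z, and the per-step optimal conditionals p*_t(y|x) := K_t(x,y)·exp((r_{t-1}(y) − r_t(x))/β). Then for all x_0,…,x_T ∈ V: μ*_T(x_T)·∏_{t=1}^{T} p*_t(x_{t-1}|x_t) = P(x_0,…,x_T)·exp(r(x_0)/β)/Z. -/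

import Mathlib

noncomputable section

/-- Extend a path `x_0,…,x_{t-1}` (given by `path : Fin t → V`) to all of `ℕ`
by setting `x_i = x` for every `i ≥ t`; in particular the endpoint is `x_t = x`. -/
def seqExt {V : Type*} {t : ℕ} (path : Fin t → V) (x : V) (i : ℕ) : V :=
  if h : i < t then path ⟨i, h⟩ else x

/-- `pathSum K r β t x = Σ_{x_0,…,x_{t-1} ∈ V} (∏_{u=1}^{t} K_u(x_u, x_{u-1})) · exp(r(x_0)/β)`,
evaluated at `x_t = x`. -/
def pathSum {V : Type*} [Fintype V] (K : ℕ → V → V → ℝ) (r : V → ℝ) (β : ℝ)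
    (t : ℕ) (x : V) : ℝ :=
  ∑ path : Fin t → V,
    (∏ u ∈ Finset.range t, K (u + 1) (seqExt path x (u + 1)) (seqExt path x u)) *
      Real.exp (r (seqExt path x 0) / β)

/-- The partial rewards: `r_0 := r` and `r_t(x) := β · log(pathSum K r β t x)` for `t ≥ 1`. -/
def partialReward {V : Type*} [Fintype V] (K : ℕ → V → V → ℝ) (r : V → ℝ) (β : ℝ) :
    ℕ → V → ℝ
  | 0 => r
  | t + 1 => fun x => β * Real.log (pathSum K r β (t + 1) x)

end

/-- Telescoping factorization of the tilted chain: the Markov chain with tilted initial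
distribution `μ*_T(x) = μ_T(x)·exp(r_T(x)/β)/Z` and per-step optimal conditionals
`p*_t(y|x) = K_t(x,y)·exp((r_{t-1}(y) − r_t(x))/β)` has joint law equal to the globally
reward-tilted chain law `P(x_{0:T})·exp(r(x_0)/β)/Z`, where
`P(x_0,…,x_T) = μ_T(x_T)·∏_{t=1}^{T} K_t(x_t, x_{t-1})`. -/
theorem tilted_chain_factorization
    {V : Type*} [Fintype V] [Nonempty V]
    (T : ℕ) (hT : 1 ≤ T)
    (μT : V → ℝ) (hμ_nonneg : ∀ x, 0 ≤ μT x) (hμ_sum : ∑ x, μT x = 1)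
    (K : ℕ → V → V → ℝ)
    (hK : ∀ t, 1 ≤ t → t ≤ T → (∀ x y, 0 ≤ K t x y) ∧ (∀ x, ∑ y, K t x y = 1))
    (β : ℝ) (hβ : 0 < β) (r : V → ℝ)
    (Z : ℝ) (hZ : Z = ∑ x, μT x * Real.exp (partialReward K r β T x / β))
    (xs : ℕ → V) :
    (μT (xs T) * Real.exp (partialReward K r β T (xs T) / β) / Z) *
      ∏ u ∈ Finset.range T,
        (K (u + 1) (xs (u + 1)) (xs u) *
          Real.exp ((partialReward K r β u (xs u) -
            partialReward K r β (u + 1) (xs (u + 1))) / β)) =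
    (μT (xs T) * ∏ u ∈ Finset.range T, K (u + 1) (xs (u + 1)) (xs u)) *
      Real.exp (r (xs 0) / β) / Z := by
  set f : ℕ → ℝ := fun u => partialReward K r β u (xs u) with hf
  rw [Finset.prod_mul_distrib, ← Real.exp_sum]
  have hsum : ∑ u ∈ Finset.range T, (f u - f (u + 1)) / β = (f 0 - f T) / β := by
    rw [← Finset.sum_div, Finset.sum_range_sub' f]
  rw [hsum]
  have h0 : f 0 = r (xs 0) := rfl
  rw [h0]
  have he : Real.exp (partialReward K r β T (xs T) / β) *
      Real.exp ((r (xs 0) - f T) / β) = Real.exp (r (xs 0) / β) := by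
    rw [← Real.exp_add]
    congr 1
    have : f T = partialReward K r β T (xs T) := rfl
    rw [← this]
    field_simp
    ring
  rw [div_mul_eq_mul_div, mul_mul_mul_comm, he]
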